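/- Let p be an odd prime and let Δ be the ring endomorphism of ℤ_p[[X]] sending Σ a_i X^i to Σ a_i X^{pi} (Frobenius on ℤ_p is the identity). For every α ∈ ℤ_p[[X]] with α ≡ 1 mod X (i.e. α a principal unit of the power series ring), the series α^p / α^Δ is congruent to 1 modulo the ideal (p, X^p)·(X), and in particular (1/p)·log(α^p/α^Δ) is a well-defined element of ℤ_p[[X]]. -/

import Mathlib

open PowerSeries

/-- The Frobenius lift `Δ` on `ℤ_p[[X]]`: `(Σ aᵢ Xⁱ)^Δ = Σ aᵢ X^{pi}`
(the Frobenius on `ℤ_p` is the identity). -/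
noncomputable def Delta (p : ℕ) [Fact p.Prime] (f : PowerSeries ℤ_[p]) : PowerSeries ℤ_[p] :=
  PowerSeries.mk fun k => if p ∣ k then coeff (k / p) f else 0

/-- The formal logarithm `log(1+T) = Σ_{m≥1} (-1)^{m+1} T^m / m`, applied to `f = 1 + T`,
computed coefficientwise (only finitely many terms contribute to each coefficient when
the constant coefficient of `f - 1` vanishes). -/
noncomputable def plog {F : Type*} [Field F] (f : PowerSeries F) : PowerSeries F :=
  PowerSeries.mk fun k =>
    ∑ m ∈ Finset.Icc 1 k, ((-1 : F) ^ (m + 1) / (m : F)) * coeff k ((f - 1) ^ m)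

/-- Frobenius coefficient formula over `ZMod p`. -/
lemma pow_p_coeff (p : ℕ) [Fact p.Prime] (β : PowerSeries (ZMod p)) (k : ℕ) :
    coeff k (β ^ p) = if p ∣ k then coeff (k / p) β else 0 := by
  have hp : 0 < p := (Fact.out : p.Prime).pos
  set q := trunc (k + 1) β with hq
  have h1 : (X : PowerSeries (ZMod p)) ^ (k + 1) ∣ β - ↑q := by
    rw [PowerSeries.X_pow_dvd_iff]
    intro m hm
    simp [hq, Polynomial.coeff_coe, coeff_trunc, hm]
  have h2 : (X : PowerSeries (ZMod p)) ^ (k + 1) ∣ β ^ p - (↑q : PowerSeries (ZMod p)) ^ p :=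
    dvd_trans h1 (sub_dvd_pow_sub_pow _ _ p)
  have h3 : coeff k (β ^ p) = coeff k ((↑q : PowerSeries (ZMod p)) ^ p) := by
    have h := (PowerSeries.X_pow_dvd_iff.mp h2) k (Nat.lt_succ_self k)
    rw [map_sub, sub_eq_zero] at h
    exact h
  have h4 : q ^ p = Polynomial.expand (ZMod p) p q := by
    have := Polynomial.map_frobenius_expand (p := p) q
    rw [ZMod.frobenius_zmod, Polynomial.map_id] at this
    exact this.symm
  rw [h3, ← Polynomial.coe_pow, Polynomial.coeff_coe, h4, Polynomial.coeff_expand hp]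
  split_ifs with h
  · rw [hq, coeff_trunc, if_pos (Nat.lt_succ_of_le (Nat.div_le_self k p))]
  · rfl

lemma key_dvd (p : ℕ) [Fact p.Prime] (α : PowerSeries ℤ_[p]) (k : ℕ) :
    (p : ℤ_[p]) ∣ coeff k (α ^ p - Delta p α) := by
  rw [← Ideal.mem_span_singleton, ← PadicInt.maximalIdeal_eq_span_p, ← PadicInt.ker_toZMod,
    RingHom.mem_ker]
  have h : (PadicInt.toZMod : ℤ_[p] →+* ZMod p) (coeff k (α ^ p - Delta p α)) =
      coeff k (PowerSeries.map PadicInt.toZMod (α ^ p - Delta p α)) := by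
    rw [coeff_map]
  rw [h, map_sub, map_sub, map_pow, pow_p_coeff, sub_eq_zero]
  simp only [Delta]
  split_ifs with hdvd
  · simp [coeff_map, coeff_mk, hdvd]
  · simp [coeff_map, coeff_mk, hdvd]

/-- `m` divides `p^(m-1)` in `ℤ_p`. -/
lemma exists_int_div (p m : ℕ) [Fact p.Prime] (hm : 1 ≤ m) :
    ∃ c : ℤ_[p], (m : ℤ_[p]) * c = (p : ℤ_[p]) ^ (m - 1) := by
  have hprime : p.Prime := Fact.out
  have hm0 : m ≠ 0 := by omega
  set v := m.factorization p with hv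
  have hd : p ^ v ∣ m := Nat.ordProj_dvd m p
  have hvm : v ≤ m - 1 := by
    have h1 : v < p ^ v := Nat.lt_pow_self hprime.one_lt
    have h2 : p ^ v ≤ m := Nat.le_of_dvd (by omega) hd
    omega
  have hnd : ¬ p ∣ m / p ^ v := Nat.not_dvd_ordCompl hprime hm0
  have hunit : IsUnit ((m / p ^ v : ℕ) : ℤ_[p]) := by
    rw [PadicInt.isUnit_iff]
    have hle := PadicInt.norm_le_one ((m / p ^ v : ℕ) : ℤ_[p])
    have hnlt : ¬ ‖((m / p ^ v : ℕ) : ℤ_[p])‖ < 1 := by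
      rw [show ((m / p ^ v : ℕ) : ℤ_[p]) = (((m / p ^ v : ℕ) : ℤ) : ℤ_[p]) by rw [Int.cast_natCast],
        PadicInt.norm_int_lt_one_iff_dvd]
      intro h
      exact hnd (by exact_mod_cast h)
    linarith [lt_or_eq_of_le hle]
  obtain ⟨w, hw⟩ := hunit
  refine ⟨(p : ℤ_[p]) ^ (m - 1 - v) * ((w⁻¹ : ℤ_[p]ˣ) : ℤ_[p]), ?_⟩
  have hnat : p ^ v * (m / p ^ v) = m := Nat.ordProj_mul_ordCompl_eq_self m p
  have hm' : (m : ℤ_[p]) = (p : ℤ_[p]) ^ v * ((w : ℤ_[p]ˣ) : ℤ_[p]) := by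
    rw [hw]
    exact_mod_cast (congrArg (fun n : ℕ => (n : ℤ_[p])) hnat).symm
  calc (m : ℤ_[p]) * ((p : ℤ_[p]) ^ (m - 1 - v) * ((w⁻¹ : ℤ_[p]ˣ) : ℤ_[p]))
      = (p : ℤ_[p]) ^ v * (p : ℤ_[p]) ^ (m - 1 - v) * (((w : ℤ_[p]ˣ) : ℤ_[p]) * ((w⁻¹ : ℤ_[p]ˣ) : ℤ_[p])) := by
        rw [hm']; ring
    _ = (p : ℤ_[p]) ^ (m - 1) := by
        rw [← Units.val_mul, mul_inv_cancel, Units.val_one, mul_one, ← pow_add]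
        congr 1
        omega

lemma log_divisible (p : ℕ) [Fact p.Prime] (u s : PowerSeries ℤ_[p])
    (hs : u - 1 = C ((p : ℕ) : ℤ_[p]) * s) :
    ∃ L : PowerSeries ℤ_[p],
      plog (PowerSeries.map (PadicInt.Coe.ringHom (p := p)) u) =
        (p : PowerSeries ℚ_[p]) * PowerSeries.map (PadicInt.Coe.ringHom (p := p)) L := by
  set f : ℤ_[p] →+* ℚ_[p] := PadicInt.Coe.ringHom (p := p) with hf
  set U := PowerSeries.map f u with hU
  set S := PowerSeries.map f s with hS
  have hU1 : U - 1 = C ((p : ℕ) : ℚ_[p]) * S := by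
    rw [hU, show (1 : PowerSeries ℚ_[p]) = PowerSeries.map f 1 from (map_one _).symm, ← map_sub,
      hs, map_mul, PowerSeries.map_C, map_natCast]
  have hA : ∀ k, ∃ e : ℤ_[p], coeff k (plog U) = ((p : ℕ) : ℚ_[p]) * (e : ℚ_[p]) := by
    intro k
    rw [plog, coeff_mk]
    have hterm : ∀ m ∈ Finset.Icc 1 k, ∃ e : ℤ_[p],
        ((-1 : ℚ_[p]) ^ (m + 1) / (m : ℚ_[p])) * coeff k ((U - 1) ^ m)
          = ((p : ℕ) : ℚ_[p]) * (e : ℚ_[p]) := by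
      intro m hm
      obtain ⟨hm1, _⟩ := Finset.mem_Icc.mp hm
      obtain ⟨c, hc⟩ := exists_int_div p m hm1
      have hmne : ((m : ℕ) : ℚ_[p]) ≠ 0 := Nat.cast_ne_zero.mpr (by omega)
      set d := coeff k (s ^ m) with hd
      have hcoeff : coeff k ((U - 1) ^ m) = ((p : ℕ) : ℚ_[p]) ^ m * (d : ℚ_[p]) := by
        rw [hU1, mul_pow, ← map_pow C, coeff_C_mul, hS, ← map_pow, coeff_map]
        rfl
      refine ⟨(-1) ^ (m + 1) * c * d, ?_⟩
      have hc' : ((m : ℕ) : ℚ_[p]) * (c : ℚ_[p]) = ((p : ℕ) : ℚ_[p]) ^ (m - 1) := by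
        exact_mod_cast congrArg (f : ℤ_[p] → ℚ_[p]) hc
      have hpm : ((p : ℕ) : ℚ_[p]) ^ m = ((p : ℕ) : ℚ_[p]) ^ (m - 1) * ((p : ℕ) : ℚ_[p]) := by
        rw [← pow_succ]
        congr 1
        omega
      rw [hcoeff, hpm, ← hc']
      push_cast
      field_simp
    choose! e he using hterm
    refine ⟨∑ m ∈ Finset.Icc 1 k, e m, ?_⟩
    rw [Finset.sum_congr rfl he, ← Finset.mul_sum]
    congr 1
    exact (map_sum f e (Finset.Icc 1 k)).symm
  choose E hE using hA
  refine ⟨PowerSeries.mk E, ?_⟩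
  ext k
  rw [show ((p : ℕ) : PowerSeries ℚ_[p]) = C ((p : ℕ) : ℚ_[p]) from
    (map_natCast C p).symm, coeff_C_mul, coeff_map, coeff_mk, hE k]
  rfl

/-- for `p` an odd prime and `α ∈ ℤ_p[[X]]` with `α ≡ 1 mod X`,
the series `α^p / α^Δ` is `≡ 1` modulo the ideal `(p, X^p)·(X)`, and
`(1/p)·log(α^p/α^Δ)` is a well-defined element of `ℤ_p[[X]]`. -/
theorem vostokov_stmt2 (p : ℕ) [Fact p.Prime] (hp : p ≠ 2)
    (α : PowerSeries ℤ_[p]) (hα : constantCoeff α = 1) :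
    ∃ u : (PowerSeries ℤ_[p])ˣ,
      (u : PowerSeries ℤ_[p]) * Delta p α = α ^ p ∧
      (u : PowerSeries ℤ_[p]) - 1 ∈
        Ideal.span {(p : PowerSeries ℤ_[p]), X ^ p} * Ideal.span {(X : PowerSeries ℤ_[p])} ∧
      ∃ L : PowerSeries ℤ_[p],
        plog (PowerSeries.map (PadicInt.Coe.ringHom (p := p)) (u : PowerSeries ℤ_[p])) =
          (p : PowerSeries ℚ_[p]) * PowerSeries.map (PadicInt.Coe.ringHom (p := p)) L := by
  have hppos : (0:ℕ) < p := (Fact.out : p.Prime).pos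
  have hpne : (p : ℤ_[p]) ≠ 0 := Nat.cast_ne_zero.mpr (Fact.out : p.Prime).ne_zero
  -- the difference is divisible by p
  have hγ : ∃ γ : PowerSeries ℤ_[p], α ^ p - Delta p α = C (p : ℤ_[p]) * γ := by
    refine ⟨PowerSeries.mk fun k => (key_dvd p α k).choose, ?_⟩
    ext k
    rw [coeff_C_mul, coeff_mk]
    exact (key_dvd p α k).choose_spec
  obtain ⟨γ, hγ⟩ := hγ
  -- constant coefficients
  have hccΔ : constantCoeff (Delta p α) = 1 := by
    have : constantCoeff (Delta p α) = coeff 0 (Delta p α) := by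
      rw [coeff_zero_eq_constantCoeff]
    rw [this]
    simp [Delta, coeff_mk, coeff_zero_eq_constantCoeff, hα]
  have hccγ : constantCoeff γ = 0 := by
    have h0 : constantCoeff (α ^ p - Delta p α) = 0 := by
      rw [map_sub, map_pow, hα, hccΔ, one_pow, sub_self]
    rw [hγ, map_mul, constantCoeff_C] at h0
    exact (mul_eq_zero.mp h0).resolve_left hpne
  obtain ⟨γ', hγ'⟩ := PowerSeries.X_dvd_iff.mpr hccγ
  -- units
  have hvΔ : IsUnit (Delta p α) := by
    rw [PowerSeries.isUnit_iff_constantCoeff, hccΔ]; exact isUnit_one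
  have hwα : IsUnit (α ^ p) := by
    rw [PowerSeries.isUnit_iff_constantCoeff, map_pow, hα, one_pow]; exact isUnit_one
  set v := hvΔ.unit with hv
  set w := hwα.unit with hw
  have hCp : C ((p:ℕ) : ℤ_[p]) = ((p:ℕ) : PowerSeries ℤ_[p]) := by
    rw [map_natCast]
  have hu1 : ((w * v⁻¹ : (PowerSeries ℤ_[p])ˣ) : PowerSeries ℤ_[p]) - 1 =
      (α ^ p - Delta p α) * ((v⁻¹ : (PowerSeries ℤ_[p])ˣ) : PowerSeries ℤ_[p]) := by
    push_cast
    rw [sub_mul, hwα.unit_spec, ← hvΔ.unit_spec]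
    rw [Units.mul_inv]
  refine ⟨w * v⁻¹, ?_, ?_, ?_⟩
  · push_cast
    rw [mul_assoc, ← hvΔ.unit_spec, Units.inv_mul, mul_one, hwα.unit_spec]
  · rw [hu1, hγ, hγ']
    have heq : C (p : ℤ_[p]) * (X * γ') * ((v⁻¹ : (PowerSeries ℤ_[p])ˣ) : PowerSeries ℤ_[p])
        = ((p : PowerSeries ℤ_[p]) * (γ' * ((v⁻¹ : (PowerSeries ℤ_[p])ˣ) : PowerSeries ℤ_[p]))) * X := by
      rw [hCp]
      ring
    rw [heq]
    refine Ideal.mul_mem_mul ?_ (Ideal.subset_span rfl)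
    exact Ideal.mul_mem_right _ _ (Ideal.subset_span (Set.mem_insert _ _))
  · apply log_divisible p _ (X * γ' * ((v⁻¹ : (PowerSeries ℤ_[p])ˣ) : PowerSeries ℤ_[p]))
    rw [hu1, hγ, hγ']
    ring
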